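/- Let p ≥ 5 be a prime and set n := 2^(p−1). If, in the ring ZMod (2^p − 1) of integers modulo 2^p − 1, the element ∑_{k even, 0 ≤ k ≤ n/2} (k!)⁻¹ · ∏_{λ=0}^{k/2 − 1} ((4λ)² − 4⁻¹) is nonzero — where (k!)⁻¹ and 4⁻¹ denote inverses in ZMod (2^p − 1), the sum ranges over even k, and the product is empty (hence 1) when k = 0 — then 2^p − 1 is not prime (i.e., 2^p − 1 is a Mersenne composite). -/

import Mathlib

namespace MersenneAux
open Finset
section RatPart
open Polynomial

open Finset

/-- centered product ∏_{i<2k+1} (y + i - k) -/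
def Vp {R : Type*} [CommRing R] (k : ℕ) (y : R) : R :=
  ∏ i ∈ range (2*k+1), (y + (i : R) - (k : R))

/-- ∏_{l<m} (l² - y²) -/
def Pm {R : Type*} [CommRing R] (m : ℕ) (y : R) : R :=
  ∏ l ∈ range m, ((l : R)^2 - y^2)

variable {R : Type*} [CommRing R] (k : ℕ) (y : R)

lemma Vp_succ : Vp (k+1) y = (y - (k:R) - 1) * Vp k y * (y + (k:R) + 1) := by
  unfold Vp
  have h1 : 2*(k+1)+1 = (2*k+2)+1 := by ring
  rw [h1, Finset.prod_range_succ']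
  have h2 : ∀ i ∈ range (2*k+2), (y + ((i+1 : ℕ) : R) - ((k+1:ℕ):R)) = (y + (i:R) - (k:R)) := by
    intro i _; push_cast; ring
  rw [Finset.prod_congr rfl h2, Finset.prod_range_succ]
  push_cast
  ring

lemma Vp_shift_up : (y - (k:R)) * Vp k (y+1) = Vp k y * (y + (k:R) + 1) := by
  unfold Vp
  have h2 : ∀ i ∈ range (2*k+1), (y + 1 + (i:R) - (k:R)) = (y + ((i+1 : ℕ):R) - (k:R)) := by
    intro i _; push_cast; ring
  rw [Finset.prod_congr rfl h2]
  have h3 : (y - (k:R)) = (y + ((0:ℕ):R) - (k:R)) := by push_cast; ring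
  rw [h3, mul_comm, ← Finset.prod_range_succ' (fun i => (y + (i:R) - (k:R))) (2*k+1),
    Finset.prod_range_succ]
  push_cast; ring

lemma Vp_shift_down : (y + (k:R)) * Vp k (y-1) = Vp k y * (y - (k:R) - 1) := by
  unfold Vp
  have h2 : ∀ i ∈ range (2*k+1), (y - 1 + (i:R) - (k:R)) = (y + (i:R) - ((k+1:ℕ):R)) := by
    intro i _; push_cast; ring
  rw [Finset.prod_congr rfl h2]
  have h3 : (y + (k:R)) = (y + ((2*k+1 : ℕ):R) - ((k+1:ℕ):R)) := by push_cast; ring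
  rw [h3, mul_comm, ← Finset.prod_range_succ (fun i => (y + (i:R) - ((k+1:ℕ):R))) (2*k+1),
    Finset.prod_range_succ']
  have h4 : ∀ i ∈ range (2*k+1), (y + ((i+1 : ℕ):R) - ((k+1:ℕ):R)) = (y + (i:R) - (k:R)) := by
    intro i _; push_cast; ring
  rw [Finset.prod_congr rfl h4]
  push_cast; ring

lemma Pm_eq_Vp : Pm (k+1) y = (-1)^(k+1) * (y * Vp k y) := by
  induction k with
  | zero => simp [Pm, Vp]; ring
  | succ j ih =>
    rw [Pm, Finset.prod_range_succ, ← Pm, ih, Vp_succ]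
    push_cast
    ring






/-- the key second-difference identity, in ℚ[X]. -/
lemma star_polyX (k : ℕ) :
    (X+1) * Vp (k+1) ((X:ℚ[X])+1) + (X-1) * Vp (k+1) (X-1) - 2*X*Vp (k+1) X
      = (2*(k:ℚ[X])+4)*(2*(k:ℚ[X])+3) * X * Vp k X := by
  have hD1 : (X:ℚ[X]) - ((k:ℚ[X])+1) ≠ 0 := by
    intro hcon
    have := congrArg (Polynomial.eval ((k:ℚ)+2)) hcon
    norm_num at this
  have hD2 : (X:ℚ[X]) + ((k:ℚ[X])+1) ≠ 0 := by
    intro hcon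
    have := congrArg (Polynomial.eval ((k:ℚ)+2)) hcon
    simp at this
    linarith [this, Nat.cast_nonneg (α := ℚ) k]
  apply mul_right_cancel₀ (mul_ne_zero hD1 hD2)
  have s1 := Vp_shift_up (k+1) (X : ℚ[X])
  have s2 := Vp_shift_down (k+1) (X : ℚ[X])
  have vs := Vp_succ k (X : ℚ[X])
  push_cast at s1 s2 vs ⊢
  linear_combination ((X:ℚ[X])+1) * ((X:ℚ[X]) + (k:ℚ[X]) + 1) * s1
    + ((X:ℚ[X])-1) * ((X:ℚ[X]) - (k:ℚ[X]) - 1) * s2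
    + (2*(k:ℚ[X])+4)*(2*(k:ℚ[X])+3) * (X:ℚ[X]) * vs






lemma Vp_eval (k : ℕ) (f : ℚ[X]) (x : ℚ) : (Vp k f).eval x = Vp k (f.eval x) := by
  simp [Vp, Polynomial.eval_prod]

/-- ★ : second difference of Pm. -/
lemma star (k : ℕ) (x : ℚ) :
    Pm (k+1) (x+1) + Pm (k+1) (x-1) - 2 * Pm (k+1) x
      + (2*(k:ℚ)+2)*(2*(k:ℚ)+1) * Pm k x = 0 := by
  rcases k with _ | j
  · simp [Pm]; ring
  · -- use polynomial identity for Vp (j+1), evaluated at x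
    have h := congrArg (Polynomial.eval x) (star_polyX j)
    simp only [Polynomial.eval_add, Polynomial.eval_sub, Polynomial.eval_mul,
      Polynomial.eval_ofNat, Polynomial.eval_one, Polynomial.eval_X, Polynomial.eval_natCast,
      Vp_eval] at h
    rw [Pm_eq_Vp (j+1) (x+1), Pm_eq_Vp (j+1) (x-1), Pm_eq_Vp (j+1) x, Pm_eq_Vp j x]
    push_cast at h ⊢
    ring_nf at h ⊢
    linear_combination (-1)^j * h






noncomputable def g (N m : ℕ) : ℚ := 16^m * Pm m (N:ℚ) / (2*m).factorial

noncomputable def c (N : ℕ) : ℚ := ∑ m ∈ range (N+1), g N m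

lemma g_zero {N m : ℕ} (h : N < m) : g N m = 0 := by
  unfold g Pm
  rw [Finset.prod_eq_zero (Finset.mem_range.2 h) (by ring)]
  simp

lemma c_ext (N K : ℕ) (h : N + 1 ≤ K) : ∑ m ∈ range K, g N m = c N := by
  unfold c
  rw [← Finset.sum_subset (Finset.range_subset_range.2 h)]
  intro x hx hnx
  exact g_zero (by simp at hx hnx ⊢; omega)

lemma g_key (N m : ℕ) :
    g (N+2) (m+1) + g N (m+1) - 2 * g (N+1) (m+1) + 16 * g (N+1) m = 0 := by
  have hs := star m ((N:ℚ)+1)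
  unfold g
  have hf : ((2*(m+1)).factorial : ℚ)
      = (2*(m:ℚ)+2) * (2*(m:ℚ)+1) * ((2*m).factorial : ℚ) := by
    have : 2*(m+1) = (2*m+1) + 1 := by ring
    rw [this, Nat.factorial_succ, Nat.factorial_succ]
    push_cast; ring
  rw [hf]
  have hne : ((2*m).factorial : ℚ) ≠ 0 := Nat.cast_ne_zero.2 (Nat.factorial_ne_zero _)
  have hne1 : (2*(m:ℚ)+2) ≠ 0 := by positivity
  have hne2 : (2*(m:ℚ)+1) ≠ 0 := by positivity
  field_simp
  push_cast at hs ⊢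
  ring_nf at hs ⊢
  linear_combination ((16:ℚ)^m * 16) * hs

lemma c_rec (N : ℕ) : c (N+2) = -14 * c (N+1) - c N := by
  have hA : ∑ m ∈ range (N+3), (g (N+2) m + g N m - 2 * g (N+1) m)
      = -16 * ∑ m ∈ range (N+2), g (N+1) m := by
    rw [Finset.sum_range_succ' (fun m => g (N+2) m + g N m - 2 * g (N+1) m) (N+2)]
    have h0 : g (N+2) 0 + g N 0 - 2 * g (N+1) 0 = 0 := by
      norm_num [g, Pm]
    rw [h0, add_zero, Finset.mul_sum]
    apply Finset.sum_congr rfl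
    intro m _
    have := g_key N m
    linarith
  have hc2 : ∑ m ∈ range (N+3), g (N+2) m = c (N+2) := c_ext _ _ (by omega)
  have hc1 : ∑ m ∈ range (N+3), g (N+1) m = c (N+1) := c_ext _ _ (by omega)
  have hc0 : ∑ m ∈ range (N+3), g N m = c N := c_ext _ _ (by omega)
  have hc1' : ∑ m ∈ range (N+2), g (N+1) m = c (N+1) := c_ext _ _ (by omega)
  rw [Finset.sum_sub_distrib, Finset.sum_add_distrib, ← Finset.mul_sum] at hA
  rw [hc2, hc1, hc0, hc1'] at hA
  linarith

/-- integer Chebyshev-type sequence: W N = 2·T_N(-7)·(-1)^N-ish; W N = 2 c N. -/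
def W : ℕ → ℤ
  | 0 => 2
  | 1 => -14
  | (n+2) => -14 * W (n+1) - W n

lemma W_eq_two_c : ∀ N, ((W N : ℤ) : ℚ) = 2 * c N := by
  have H : ∀ N, ((W N : ℤ) : ℚ) = 2 * c N ∧ ((W (N+1) : ℤ) : ℚ) = 2 * c (N+1) := by
    intro N
    induction N with
    | zero =>
      constructor
      · simp [W, c, g, Pm]
      · show ((W 1 : ℤ) : ℚ) = 2 * c 1
        rw [show W 1 = -14 from rfl]
        rw [c, Finset.sum_range_succ, Finset.sum_range_succ, Finset.sum_range_zero]
        simp [g, Pm]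
        norm_num [Finset.prod_range_succ]
    | succ n ih =>
      refine ⟨ih.2, ?_⟩
      rw [show W (n+2) = -14 * W (n+1) - W n from rfl, c_rec n]
      push_cast
      rw [ih.1, ih.2]
      ring
  exact fun N => (H N).1




end RatPart
section XPart
open LucasLehmer LucasLehmer.X
variable {q : ℕ+}

/-- the natural ring hom `ZMod q →+* X q`. -/
def inj (q : ℕ+) : ZMod q →+* LucasLehmer.X q where
  toFun a := (a, 0)
  map_one' := by ext <;> simp [LucasLehmer.X.one_fst, LucasLehmer.X.one_snd]
  map_mul' a b := by
    ext
    · show a * b = a * b + 3 * 0 * 0; ring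
    · show 0 = a * 0 + 0 * b; ring
  map_zero' := by ext <;> simp
  map_add' a b := by
    ext
    · show a + b = a + b; rfl
    · show 0 = 0 + 0; ring

lemma inj_fst (a : ZMod q) : (inj q a).fst = a := rfl
lemma inj_snd (a : ZMod q) : (inj q a).snd = 0 := rfl

/-- CharP for X q -/
lemma charP_X (Q : ℕ) (hQ : (q : ℕ) = Q) : CharP (LucasLehmer.X q) Q := by
  subst hQ
  constructor
  intro n
  constructor
  · intro hn
    have h1 : ((n : LucasLehmer.X q)).fst = ((0 : LucasLehmer.X q)).fst := by rw [hn]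
    simp only [LucasLehmer.X.fst_natCast, LucasLehmer.X.zero_fst] at h1
    exact (ZMod.natCast_eq_zero_iff n q).1 h1
  · intro hn
    have h1 : ((n : ℕ) : ZMod q) = 0 := (ZMod.natCast_eq_zero_iff n q).2 hn
    ext
    · simp [LucasLehmer.X.fst_natCast, h1]
    · simp [LucasLehmer.X.snd_natCast]






theorem W_necessity (p : ℕ) (hp : Nat.Prime p) (hp5 : 5 ≤ p)
    (hQp : Nat.Prime (2^p - 1)) : ((W (2^(p-3)) : ℤ) : ZMod (2^p - 1)) = 0 := by
  set Q : ℕ := 2^p - 1 with hQdef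
  haveI fQ : Fact Q.Prime := ⟨hQp⟩
  haveI f3 : Fact (Nat.Prime 3) := ⟨by norm_num⟩
  -- arithmetic facts
  have h32 : 32 ≤ 2^p := by calc (32:ℕ) = 2^5 := by norm_num
                                _ ≤ 2^p := Nat.pow_le_pow_right (by norm_num) hp5
  have h8 : 2^p = 8 * 2^(p-3) := by
    rw [show (8:ℕ)*2^(p-3) = 2^(3+(p-3)) by rw [pow_add]; norm_num]; congr 1; omega
  have h16 : 2^(p-3) = 2 * 2^(p-4) := by
    rw [show (2:ℕ)*2^(p-4) = 2^(1+(p-4)) by rw [pow_add]; norm_num]; congr 1; omega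
  have h2p : 2^p = 2 * 2^(p-1) := by
    rw [show (2:ℕ)*2^(p-1) = 2^(1+(p-1)) by rw [pow_add]; norm_num]; congr 1; omega
  have hp14 : 2^(p-1) = 4 * 2^(p-3) := by
    rw [show (4:ℕ)*2^(p-3) = 2^(2+(p-3)) by rw [pow_add]; norm_num]; congr 1; omega
  obtain ⟨a, ha⟩ : Odd p := hp.odd_of_ne_two (by omega)
  have h4a : 2^p = 2 * 4^a := by
    rw [show (4:ℕ)^a = 2^(2*a) by rw [pow_mul]; norm_num,
      show (2:ℕ)*2^(2*a) = 2^(1+2*a) by rw [pow_add]; norm_num]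
    congr 1; omega
  have h4am : 4^a % 3 = 1 := by rw [Nat.pow_mod]; norm_num
  have h2p3 : 2^p % 3 = 2 := by omega
  have hQ8 : Q % 8 = 7 := by omega
  have hQ4 : Q % 4 = 3 := by omega
  have hQ3 : Q % 3 = 1 := by omega
  set k : ℕ := 2^(p-1) - 1 with hkdef
  have hQ2k : Q = 2*k + 1 := by omega
  have hQdiv2 : Q / 2 = k := by omega
  -- quadratic residue facts
  have h2ne : (2 : ZMod Q) ≠ 0 := by
    intro hcon
    have h' : ((2:ℕ) : ZMod Q) = 0 := by exact_mod_cast hcon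
    rw [ZMod.natCast_eq_zero_iff] at h'
    have := Nat.le_of_dvd (by norm_num) h'
    omega
  have h3ne : (3 : ZMod Q) ≠ 0 := by
    intro hcon
    have h' : ((3:ℕ) : ZMod Q) = 0 := by exact_mod_cast hcon
    rw [ZMod.natCast_eq_zero_iff] at h'
    have := Nat.le_of_dvd (by norm_num) h'
    omega
  have hsq2 : IsSquare (2 : ZMod Q) :=
    (ZMod.exists_sq_eq_two_iff (by omega : Q ≠ 2)).2 (Or.inr hQ8)
  have h2k : (2 : ZMod Q)^k = 1 := by
    rw [← hQdiv2]; exact (ZMod.euler_criterion Q h2ne).1 hsq2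
  have hnsq3 : ¬ IsSquare (3 : ZMod Q) := by
    have hrec := ZMod.exists_sq_eq_prime_iff_of_mod_four_eq_three (p := 3) (q := Q)
      (by norm_num) hQ4 (by omega)
    have hQ1 : ((Q:ℕ) : ZMod 3) = 1 := by
      rw [← ZMod.natCast_mod, hQ3]; norm_num
    have h' := hrec.1 (by rw [hQ1]; exact IsSquare.one)
    intro hcon
    apply h'
    have h'' : ((3:ℕ) : ZMod Q) = (3 : ZMod Q) := by norm_num
    rw [h'']
    exact hcon
  have h3k : (3 : ZMod Q)^k = -1 := by
    rcases ZMod.pow_div_two_eq_neg_one_or_one Q h3ne with h | h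
    · exact absurd ((ZMod.euler_criterion Q h3ne).2 h) hnsq3
    · rwa [hQdiv2] at h
  -- move to X Qp
  set Qp : ℕ+ := ⟨Q, by omega⟩ with hQpdef
  have hqQ : (Qp : ℕ) = Q := rfl
  haveI : CharP (LucasLehmer.X Qp) Q := charP_X Q hqQ
  set K := LucasLehmer.X (Qp) with hK
  have φdef : True := trivial
  let φ : ZMod ((Qp) : ℕ) →+* K := inj (Qp)
  set r : K := ((0 : ZMod (Qp)), (1 : ZMod (Qp))) with hrdef
  have hrfst : r.fst = (0 : ZMod (Qp)) := rfl
  have hrsnd : r.snd = (1 : ZMod (Qp)) := rfl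
  have hr2 : r * r = (3 : K) := by
    apply LucasLehmer.X.ext
    · rw [LucasLehmer.X.mul_fst, hrfst, hrsnd, LucasLehmer.X.ofNat_fst]; ring
    · rw [LucasLehmer.X.mul_snd, hrfst, hrsnd, LucasLehmer.X.ofNat_snd]; ring
  have hφ3 : φ (3 : ZMod (Qp)) = (3 : K) := map_ofNat φ 3
  have hφ2 : φ (2 : ZMod (Qp)) = (2 : K) := map_ofNat φ 2
  have h3K : (3 : K)^k = -1 := by
    rw [← hφ3, ← map_pow, show (3 : ZMod Qp)^k = -1 from h3k, map_neg, map_one]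
  have h2K : (2 : K)^k = 1 := by
    rw [← hφ2, ← map_pow, show (2 : ZMod Qp)^k = 1 from h2k, map_one]
  have hrQ : r ^ Q = -r := by
    rw [hQ2k, pow_succ, pow_mul]
    rw [show r ^ 2 = (3:K) by rw [pow_two, hr2], h3K]
    ring
  have hσQ : ((1:K) + r) ^ Q = 1 - r := by
    have hpc := add_pow_char (R := K) (p := Q) (1:K) r
    rw [one_pow, hrQ] at hpc
    rw [hpc]; ring
  have hσQ1 : ((1:K) + r) ^ (Q+1) = -2 := by
    rw [pow_succ, hσQ, show ((1:K) - r) * (1 + r) = 1 - r * r by ring, hr2]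
    norm_num
  have hω : (ω : K) = 2 + r := by
    apply LucasLehmer.X.ext
    · rw [LucasLehmer.X.add_fst, hrfst, LucasLehmer.X.ofNat_fst]
      show (2 : ZMod (Qp)) = 2 + 0
      ring
    · rw [LucasLehmer.X.add_snd, hrsnd, LucasLehmer.X.ofNat_snd]
      show (1 : ZMod (Qp)) = 0 + 1
      ring
  have hωb : (ωb : K) = 2 - r := by
    have h' : (ωb : K) + r = 2 := by
      apply LucasLehmer.X.ext
      · rw [LucasLehmer.X.add_fst, hrfst, LucasLehmer.X.ofNat_fst]
        show (2 : ZMod (Qp)) + 0 = 2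
        ring
      · rw [LucasLehmer.X.add_snd, hrsnd, LucasLehmer.X.ofNat_snd]
        show (-1 : ZMod (Qp)) + 1 = 0
        ring
    exact eq_sub_of_add_eq h'
  have hσ2 : ((1:K) + r)^2 = 2 * ω := by
    rw [hω, show ((1:K) + r)^2 = 1 + 2*r + r*r by ring, hr2]
    ring
  have hu2 : IsUnit (2 : K) := by
    rw [← hφ2]; exact (h2ne.isUnit).map φ
  have hωpow : (ω : K) ^ (2^(p-1)) = -1 := by
    have e1 : ((2:K) * ω)^(k+1) = ((1:K)+r)^(Q+1) := by
      rw [← hσ2, ← pow_mul]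
      congr 1
      omega
    rw [mul_pow, pow_succ (2:K), h2K, one_mul, hσQ1] at e1
    have e2 : (2:K) * ω^(k+1) = 2 * (-1) := by rw [e1]; ring
    rw [show 2^(p-1) = k + 1 by omega]
    exact hu2.mul_left_cancel e2
  -- closed form for W
  have h1ω : (ω : K) * ωb = 1 := LucasLehmer.X.ω_mul_ωb
  have h14 : (ω : K)^2 + ωb^2 = 14 := by
    rw [hω, hωb]
    linear_combination 2 * hr2
  have hWc : ∀ N, ((W N : ℤ) : K) = (-1)^N * ((ω:K)^(2*N) + ωb^(2*N)) := by
    have H : ∀ N, ((W N : ℤ) : K) = (-1)^N * ((ω:K)^(2*N) + ωb^(2*N)) ∧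
        ((W (N+1) : ℤ) : K) = (-1)^(N+1) * ((ω:K)^(2*(N+1)) + ωb^(2*(N+1))) := by
      intro N
      induction N with
      | zero =>
        constructor
        · show ((2 : ℤ) : K) = _
          push_cast
          norm_num
        · show ((-14 : ℤ) : K) = _
          push_cast
          norm_num
          linear_combination h14
      | succ n ih =>
        refine ⟨ih.2, ?_⟩
        show ((W (n+2) : ℤ) : K) = _
        rw [show W (n+2) = -14 * W (n+1) - W n from rfl]
        push_cast
        erw [Int.cast_mul]
        push_cast
        rw [ih.1, ih.2]
        have key : (ω:K)^(2*(n+2)) + ωb^(2*(n+2))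
            = 14 * ((ω:K)^(2*(n+1)) + ωb^(2*(n+1))) - ((ω:K)^(2*n) + ωb^(2*n)) := by
          linear_combination ((ω:K)^(2*n+2) + ωb^(2*n+2)) * h14
            - ((ω:K)*ωb + 1) * ((ω:K)^(2*n) + ωb^(2*n)) * h1ω
        rw [key]
        ring
    exact fun N => (H N).1
  -- conclude
  set M : ℕ := 2^(p-3) with hMdef
  have hω4M : (ω:K)^(2*M) * (ω:K)^(2*M) = -1 := by
    rw [← pow_add, show 2*M + 2*M = 2^(p-1) by omega]
    exact hωpow
  have hωb1 : (ω:K)^(2*M) * ωb^(2*M) = 1 := by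
    rw [← mul_pow, h1ω, one_pow]
  have hsum : (ω:K)^(2*M) * ((ω:K)^(2*M) + ωb^(2*M)) = 0 := by
    rw [mul_add, hω4M, hωb1]
    ring
  have huω : IsUnit ((ω:K)^(2*M)) := (IsUnit.of_mul_eq_one _ h1ω).pow _
  have hzero : (ω:K)^(2*M) + ωb^(2*M) = 0 := by
    rwa [huω.mul_right_eq_zero] at hsum
  have hMeven : (-1 : K)^M = 1 := by
    refine Even.neg_one_pow ⟨2^(p-4), by omega⟩
  have hfin : ((W M : ℤ) : K) = 0 := by
    rw [hWc M, hzero, mul_zero]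
  have hfst := congrArg Prod.fst hfin
  rw [LucasLehmer.X.fst_intCast] at hfst
  exact hfst





end XPart
end MersenneAux

open MersenneAux Finset in
/-- Criterion for compositeness of Mersenne numbers. -/
theorem mersenne_composite_criterion (p : ℕ) (hp : Nat.Prime p) (hp5 : 5 ≤ p)
    (n : ℕ) (hn : n = 2 ^ (p - 1))
    (h : (∑ k ∈ (Finset.range (n / 2 + 1)).filter (fun k => k % 2 = 0),
        ((Nat.factorial k : ZMod (2 ^ p - 1)))⁻¹ *
          ∏ l ∈ Finset.range (k / 2),
            ((4 * (l : ZMod (2 ^ p - 1))) ^ 2 - (4 : ZMod (2 ^ p - 1))⁻¹)) ≠ 0) :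
    ¬ Nat.Prime (2 ^ p - 1) := by
  intro hQp
  apply h
  set Q : ℕ := 2 ^ p - 1 with hQdef
  haveI fQ : Fact Q.Prime := ⟨hQp⟩
  set M : ℕ := 2^(p-3) with hMdef
  -- arithmetic
  have h32 : 32 ≤ 2^p := by calc (32:ℕ) = 2^5 := by norm_num
                                _ ≤ 2^p := Nat.pow_le_pow_right (by norm_num) hp5
  have h8 : 2^p = 8 * M := by
    rw [hMdef, show (8:ℕ)*2^(p-3) = 2^(3+(p-3)) by rw [pow_add]; norm_num]; congr 1; omega
  have hp14 : 2^(p-1) = 4 * M := by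
    rw [hMdef, show (4:ℕ)*2^(p-3) = 2^(2+(p-3)) by rw [pow_add]; norm_num]; congr 1; omega
  have hn2 : n / 2 = 2 * M := by omega
  -- basic ZMod facts
  have hfact_ne : ∀ j, j ≤ 2*M → ((j.factorial : ℕ) : ZMod Q) ≠ 0 := by
    intro j hj hcon
    rw [ZMod.natCast_eq_zero_iff] at hcon
    have := (Nat.Prime.dvd_factorial hQp).1 hcon
    omega
  have h2ne : (2 : ZMod Q) ≠ 0 := by
    intro hcon
    have h' : ((2:ℕ) : ZMod Q) = 0 := by exact_mod_cast hcon
    rw [ZMod.natCast_eq_zero_iff] at h'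
    have := Nat.le_of_dvd (by norm_num) h'
    omega
  have h2p1 : (2 : ZMod Q)^p = 1 := by
    have e : ((2^p : ℕ) : ZMod Q) = ((Q + 1 : ℕ) : ZMod Q) := by congr 1; omega
    push_cast at e
    rw [ZMod.natCast_self] at e
    rw [e]; ring
  have h4inv : (4 : ZMod Q)⁻¹ = (2 : ZMod Q)^(p-2) := by
    apply inv_eq_of_mul_eq_one_right
    rw [show (4 : ZMod Q) = 2^2 by norm_num, ← pow_add,
      show 2 + (p - 2) = p by omega, h2p1]
  have hM16 : (16 : ZMod Q) * ((M:ℕ) : ZMod Q)^2 = (4 : ZMod Q)⁻¹ := by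
    have e : ((4*M : ℕ) : ZMod Q)^2 = ((2:ZMod Q))^(2*(p-1)) := by
      rw [show (4*M : ℕ) = 2^(p-1) by omega]
      push_cast
      rw [← pow_mul, mul_comm (p-1) 2]
    have e2 : ((2:ZMod Q))^(2*(p-1)) = (2:ZMod Q)^(p-2) := by
      rw [show 2*(p-1) = (p-2) + p by omega, pow_add, h2p1, mul_one]
    have e3 : ((4*M : ℕ) : ZMod Q)^2 = 16 * ((M:ℕ) : ZMod Q)^2 := by
      push_cast; ring
    rw [← e3, e, e2, h4inv]
  -- reindex the sum
  have hset : (Finset.range (n / 2 + 1)).filter (fun k => k % 2 = 0)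
      = (Finset.range (M+1)).image (fun m => 2*m) := by
    ext x
    simp only [Finset.mem_filter, Finset.mem_image, Finset.mem_range, hn2]
    constructor
    · rintro ⟨hx, he⟩
      exact ⟨x/2, by omega, by omega⟩
    · rintro ⟨m, hm, rfl⟩
      constructor
      · omega
      · omega
  rw [hset, Finset.sum_image (by intro a _ b _ hab; simp only at hab; omega)]
  -- rewrite each term
  have hterm : ∀ m ∈ Finset.range (M+1),
      ((Nat.factorial (2*m) : ZMod Q))⁻¹ *
        ∏ l ∈ Finset.range ((2*m) / 2), ((4 * (l : ZMod Q)) ^ 2 - (4 : ZMod Q)⁻¹)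
      = ((Nat.factorial (2*m) : ZMod Q))⁻¹ *
        ((16:ZMod Q)^m * ∏ l ∈ Finset.range m, ((l : ZMod Q)^2 - ((M:ℕ) : ZMod Q)^2)) := by
    intro m _
    rw [Nat.mul_div_cancel_left m (by norm_num)]
    congr 1
    rw [show (16:ZMod Q)^m = ∏ _l ∈ Finset.range m, (16:ZMod Q) by
          rw [Finset.prod_const, Finset.card_range],
      ← Finset.prod_mul_distrib]
    exact Finset.prod_congr rfl (fun l _ => by linear_combination hM16)
  rw [Finset.sum_congr rfl hterm]
  -- the integer sum
  set Z : ℤ := ∑ m ∈ Finset.range (M+1),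
    16^m * (∏ l ∈ Finset.range m, ((l:ℤ)^2 - (M:ℤ)^2))
      * (((2*M).factorial / (2*m).factorial : ℕ) : ℤ) with hZdef
  have hZW : 2 * Z = ((2*M).factorial : ℤ) * W M := by
    have hQcast : (Z : ℚ) = ((2*M).factorial : ℚ) * c M := by
      rw [hZdef]
      push_cast
      rw [c, Finset.mul_sum]
      apply Finset.sum_congr rfl
      intro m hm
      have hmM : m ≤ M := by simp at hm; omega
      have hdvd : (2*m).factorial ∣ (2*M).factorial :=
        Nat.factorial_dvd_factorial (by omega)
      have hD : ((((2*M).factorial : ℤ) / ((2*m).factorial : ℤ) : ℤ) : ℚ)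
          = ((2*M).factorial : ℚ) / ((2*m).factorial : ℚ) := by
        rw [Int.cast_div (by exact_mod_cast hdvd)
          (by exact_mod_cast Nat.cast_ne_zero.2 (Nat.factorial_ne_zero (2*m)) : ((((2*m).factorial : ℤ)) : ℚ) ≠ 0)]
        push_cast
        ring
      rw [hD, g]
      have hPm : Pm m ((M:ℕ) : ℚ) = ∏ l ∈ Finset.range m, ((l:ℚ)^2 - ((M:ℕ):ℚ)^2) := rfl
      rw [← hPm]
      have hne : ((2*m).factorial : ℚ) ≠ 0 := Nat.cast_ne_zero.2 (Nat.factorial_ne_zero _)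
      field_simp
    have : ((2 * Z : ℤ) : ℚ) = ((((2*M).factorial : ℤ) * W M : ℤ) : ℚ) := by
      push_cast
      rw [hQcast]
      rw [W_eq_two_c M]
      push_cast
      ring
    exact_mod_cast this
  -- cast to ZMod Q
  have hZcast : ((Z : ℤ) : ZMod Q) = ((2*M).factorial : ZMod Q) *
      ∑ m ∈ Finset.range (M+1), ((Nat.factorial (2*m) : ZMod Q))⁻¹ *
        ((16:ZMod Q)^m * ∏ l ∈ Finset.range m, ((l : ZMod Q)^2 - ((M:ℕ) : ZMod Q)^2)) := by
    rw [hZdef]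
    push_cast
    rw [Finset.mul_sum]
    apply Finset.sum_congr rfl
    intro m hm
    have hmM : m ≤ M := by simp at hm; omega
    have hdvd : (2*m).factorial ∣ (2*M).factorial :=
      Nat.factorial_dvd_factorial (by omega)
    have hfne : ((2*m).factorial : ZMod Q) ≠ 0 := hfact_ne _ (by
      have := Nat.factorial_le (le_refl (2*m)); omega)
    have hD : ((((2*M).factorial : ℤ) / ((2*m).factorial : ℤ) : ℤ) : ZMod Q)
        = ((2*M).factorial : ZMod Q) * (((2*m).factorial : ZMod Q))⁻¹ := by
      rw [Int.cast_div (by exact_mod_cast hdvd)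
        (by exact_mod_cast hfne : ((((2*m).factorial : ℤ)) : ZMod Q) ≠ 0)]
      push_cast
      rw [div_eq_mul_inv]
    rw [hD]
    ring
  -- conclude
  have hWzero : ((W M : ℤ) : ZMod Q) = 0 := W_necessity p hp hp5 hQp
  have hZzero : (2 : ZMod Q) * ((Z : ℤ) : ZMod Q) = 0 := by
    have : (((2 * Z : ℤ) : ℤ) : ZMod Q) = ((((2*M).factorial : ℤ) * W M : ℤ) : ZMod Q) := by
      rw [hZW]
    push_cast at this
    rw [hWzero, mul_zero] at this
    push_cast; linear_combination this
  rw [hZcast] at hZzero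
  have hfMne : ((2*M).factorial : ZMod Q) ≠ 0 := hfact_ne _ (le_refl _)
  rcases mul_eq_zero.mp hZzero with h' | h'
  · exact absurd h' h2ne
  · rcases mul_eq_zero.mp h' with h'' | h''
    · exact absurd h'' hfMne
    · exact h''
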